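/- If P is an orthogonal projection on R^p, A is a p×T real matrix, and the nuclear norms of PA and A are equal (∑_k σ_k(PA) = ∑_k σ_k(A)), then PA = A. -/

import Mathlib

open Matrix BigOperators

/-- Negated unsorted singular values of `M` (square roots of eigenvalues of `Mᴴ * M`). -/
noncomputable def negSvalsUnsorted {m n : ℕ} (M : Matrix (Fin m) (Fin n) ℝ) : Fin n → ℝ :=
  fun i => - Real.sqrt ((Matrix.isHermitian_conjTranspose_mul_self M).eigenvalues i)

/-- The `k`-th largest singular value of `M` (`k` is 0-indexed, so `svals M 0 = σ₁(M)`). -/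
noncomputable def svals {m n : ℕ} (M : Matrix (Fin m) (Fin n) ℝ) : Fin n → ℝ :=
  fun k => - negSvalsUnsorted M (Tuple.sort (negSvalsUnsorted M) k)

/-- The nuclear norm of `M`: sum of the singular values. -/
noncomputable def nucNorm {m n : ℕ} (M : Matrix (Fin m) (Fin n) ℝ) : ℝ := ∑ k, svals M k

/-- The Frobenius (Hilbert–Schmidt) norm of `M`. -/
noncomputable def frobNorm {m n : ℕ} (M : Matrix (Fin m) (Fin n) ℝ) : ℝ :=
  Real.sqrt (∑ i, ∑ j, (M i j)^2)


lemma nucNorm_eq_sum_sqrt {m n : ℕ} (M : Matrix (Fin m) (Fin n) ℝ) :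
    nucNorm M = ∑ i, Real.sqrt ((Matrix.isHermitian_conjTranspose_mul_self M).eigenvalues i) := by
  unfold nucNorm svals
  rw [Equiv.sum_comp (Tuple.sort (negSvalsUnsorted M)) (fun k => - negSvalsUnsorted M k)]
  simp [negSvalsUnsorted]

set_option maxHeartbeats 1000000

/-- If `P` is an orthogonal projection on `ℝ^p`, `A` is a `p×T` real matrix,
and the nuclear norms of `P * A` and `A` are equal, then `P * A = A`. -/
theorem proj_mul_eq_of_nucNorm_eq {p T : ℕ} (P : Matrix (Fin p) (Fin p) ℝ)
    (A : Matrix (Fin p) (Fin T) ℝ) (hidem : P * P = P) (hsymm : P.IsSymm)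
    (heq : nucNorm (P * A) = nucNorm A) :
    P * A = A := by
  classical
  set M : Matrix (Fin p) (Fin T) ℝ := P * A with hMdef
  have hPH : Pᴴ = P := by
    ext i j
    rw [conjTranspose_apply, star_trivial]
    exact hsymm.apply i j
  have hM := Matrix.isHermitian_conjTranspose_mul_self M
  have hA := Matrix.isHermitian_conjTranspose_mul_self A
  set μ : Fin T → ℝ := hM.eigenvalues with hμdef
  set lam : Fin T → ℝ := hA.eigenvalues with hlamdef
  set V : Matrix (Fin T) (Fin T) ℝ := (hM.eigenvectorUnitary : Matrix (Fin T) (Fin T) ℝ) with hVdef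
  set U : Matrix (Fin T) (Fin T) ℝ := (hA.eigenvectorUnitary : Matrix (Fin T) (Fin T) ℝ) with hUdef
  have hV1 : star V * V = 1 := (Matrix.mem_unitaryGroup_iff').mp (hM.eigenvectorUnitary).2
  have hV2 : V * star V = 1 := (Matrix.mem_unitaryGroup_iff).mp (hM.eigenvectorUnitary).2
  have hU1 : star U * U = 1 := (Matrix.mem_unitaryGroup_iff').mp (hA.eigenvectorUnitary).2
  have hU2 : U * star U = 1 := (Matrix.mem_unitaryGroup_iff).mp (hA.eigenvectorUnitary).2
  have hμ0 : ∀ i, 0 ≤ μ i := fun i =>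
    (Matrix.posSemidef_conjTranspose_mul_self M).eigenvalues_nonneg i
  have hlam0 : ∀ j, 0 ≤ lam j := fun j =>
    (Matrix.posSemidef_conjTranspose_mul_self A).eigenvalues_nonneg j
  have hMspec : Mᴴ * M = V * diagonal μ * star V := by
    have := hM.spectral_theorem
    exact this.trans (by simp [RCLike.ofReal_real_eq_id, Unitary.conjStarAlgAut_apply, hVdef, hμdef])
  have hAspec : Aᴴ * A = U * diagonal lam * star U := by
    have := hA.spectral_theorem
    exact this.trans (by simp [RCLike.ofReal_real_eq_id, Unitary.conjStarAlgAut_apply, hUdef, hlamdef])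
  set g : Fin T → ℝ := fun i => if μ i = 0 then 0 else (Real.sqrt (μ i))⁻¹ with hgdef
  set C : Matrix (Fin T) (Fin T) ℝ := V * diagonal g * star V with hCdef
  set W : Matrix (Fin p) (Fin T) ℝ := M * C with hWdef
  have hgstar : star g = g := by
    funext i; simp
  have hCH : Cᴴ = C := by
    rw [hCdef]
    simp only [conjTranspose_mul, conjTranspose_conjTranspose, diagonal_conjTranspose, hgstar,
      star_eq_conjTranspose]
    rw [Matrix.mul_assoc]
  have hWH : Wᴴ = C * Mᴴ := by
    rw [hWdef, conjTranspose_mul, hCH]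
  have hPM : P * M = M := by rw [hMdef, ← Matrix.mul_assoc, hidem]
  have hPW : P * W = W := by rw [hWdef, ← Matrix.mul_assoc, hPM]
  have hMP : Mᴴ * P = Mᴴ := by
    calc Mᴴ * P = Mᴴ * Pᴴ := by rw [hPH]
      _ = (P * M)ᴴ := (conjTranspose_mul P M).symm
      _ = Mᴴ := by rw [hPM]
  have hMA : Mᴴ * A = Mᴴ * M := by
    conv_rhs => rw [hMdef, ← Matrix.mul_assoc, hMP]
  -- trace value
  have htrdiag : Wᴴ * A = V * diagonal (fun i => g i * μ i) * star V := by
    rw [hWH, Matrix.mul_assoc, hMA, hMspec, hCdef]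
    calc V * diagonal g * star V * (V * diagonal μ * star V)
        = V * diagonal g * (star V * V) * diagonal μ * star V := by
          simp only [Matrix.mul_assoc]
      _ = V * (diagonal g * diagonal μ) * star V := by
          rw [hV1]; simp only [Matrix.mul_one, Matrix.mul_assoc]
      _ = V * diagonal (fun i => g i * μ i) * star V := by
          rw [diagonal_mul_diagonal]
  have hgμ : ∀ i, g i * μ i = Real.sqrt (μ i) := by
    intro i
    by_cases h : μ i = 0
    · simp [hgdef, h]
    · simp only [hgdef, if_neg h]
      rw [← Real.sqrt_mul_self (hμ0 i)]
      field_simp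
      rw [Real.sq_sqrt (Real.sqrt_nonneg _)]
  have htr : trace (Wᴴ * A) = ∑ j, Real.sqrt (lam j) := by
    rw [htrdiag, Matrix.trace_mul_cycle, hV1, Matrix.one_mul, trace_diagonal]
    have h1 : ∑ i, g i * μ i = ∑ i, Real.sqrt (μ i) := by
      exact Finset.sum_congr rfl fun i _ => hgμ i
    rw [h1]
    have h2 := nucNorm_eq_sum_sqrt M
    have h3 := nucNorm_eq_sum_sqrt A
    rw [h2, h3] at heq
    exact heq
  -- columns
  set X : Matrix (Fin p) (Fin T) ℝ := A * U with hXdef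
  set Om : Matrix (Fin p) (Fin T) ℝ := W * U with hOmdef
  have hXX : Xᴴ * X = diagonal lam := by
    rw [hXdef, conjTranspose_mul]
    calc star U * Aᴴ * (A * U) = star U * (Aᴴ * A) * U := by simp only [Matrix.mul_assoc]
      _ = star U * (U * diagonal lam * star U) * U := by rw [hAspec]
      _ = (star U * U) * diagonal lam * (star U * U) := by simp only [Matrix.mul_assoc]
      _ = diagonal lam := by rw [hU1]; simp
  set e : Fin T → ℝ := fun i => g i * μ i * g i with hedef
  have he01 : ∀ i, 0 ≤ e i ∧ e i ≤ 1 := by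
    intro i
    by_cases h : μ i = 0
    · simp [hedef, hgdef, h]
    · have hpos : 0 < μ i := lt_of_le_of_ne (hμ0 i) (Ne.symm h)
      have hs : Real.sqrt (μ i) > 0 := Real.sqrt_pos.mpr hpos
      have : e i = 1 := by
        simp only [hedef, hgdef, if_neg h]
        rw [← Real.sqrt_mul_self (hμ0 i)]
        field_simp
        rw [Real.sq_sqrt (Real.sqrt_nonneg _)]
      rw [this]; exact ⟨zero_le_one, le_refl 1⟩
  have hWW : Wᴴ * W = V * diagonal e * star V := by
    rw [hWH, hWdef, Matrix.mul_assoc, ← Matrix.mul_assoc (Mᴴ) M C]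
    rw [hMspec, hCdef]
    calc V * diagonal g * star V * (V * diagonal μ * star V * (V * diagonal g * star V))
        = V * diagonal g * (star V * V) * diagonal μ * (star V * V) * diagonal g * star V := by
          simp only [Matrix.mul_assoc]
      _ = V * (diagonal g * diagonal μ * diagonal g) * star V := by
          rw [hV1]; simp only [Matrix.mul_one, Matrix.one_mul, Matrix.mul_assoc]
      _ = V * diagonal e * star V := by
          rw [diagonal_mul_diagonal, diagonal_mul_diagonal]
  set Q : Matrix (Fin T) (Fin T) ℝ := star V * U with hQdef
  have hOO : Omᴴ * Om = star Q * (diagonal e * Q) := by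
    rw [hOmdef, conjTranspose_mul]
    calc star U * Wᴴ * (W * U) = star U * (Wᴴ * W) * U := by simp only [Matrix.mul_assoc]
      _ = star U * (V * diagonal e * star V) * U := by rw [hWW]
      _ = star Q * (diagonal e * Q) := by
          rw [hQdef, Matrix.star_mul, star_star]
          simp only [star_eq_conjTranspose, Matrix.mul_assoc]
  have hQQ : star Q * Q = 1 := by
    rw [hQdef]
    calc star (star V * U) * (star V * U) = star U * (V * star V) * U := by
          rw [Matrix.star_mul, star_star]
          simp only [Matrix.mul_assoc]
      _ = 1 := by rw [hV2]; simpa using hU1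
  have hXcol : ∀ j, ∑ r, X r j * X r j = lam j := by
    intro j
    have h := congrFun (congrFun hXX j) j
    simpa [Matrix.mul_apply, conjTranspose_apply, diagonal_apply_eq] using h
  have hOcol : ∀ j, ∑ r, Om r j * Om r j ≤ 1 := by
    intro j
    have h := congrFun (congrFun hOO j) j
    have hl : (Omᴴ * Om) j j = ∑ r, Om r j * Om r j := by
      simp [Matrix.mul_apply, conjTranspose_apply]
    have hr : (star Q * (diagonal e * Q)) j j = ∑ i, e i * (Q i j * Q i j) := by
      rw [Matrix.mul_apply]
      refine Finset.sum_congr rfl fun i _ => ?_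
      rw [Matrix.diagonal_mul]
      simp [Matrix.star_apply]
      ring
    have h2 : ∑ r, Om r j * Om r j = ∑ i, e i * (Q i j * Q i j) := by
      rw [← hl, h, hr]
    rw [h2]
    have h3 : ∑ i, Q i j * Q i j = 1 := by
      have h4 := congrFun (congrFun hQQ j) j
      simpa [Matrix.mul_apply, conjTranspose_apply, Matrix.one_apply] using h4
    calc ∑ i, e i * (Q i j * Q i j) ≤ ∑ i, 1 * (Q i j * Q i j) := by
          apply Finset.sum_le_sum
          intro i _
          exact mul_le_mul_of_nonneg_right (he01 i).2 (mul_self_nonneg _)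
      _ = 1 := by simpa using h3
  have hsumtr : ∑ j, (∑ r, Om r j * X r j) = trace (Wᴴ * A) := by
    have h1 : Omᴴ * X = star U * (Wᴴ * A) * U := by
      rw [hOmdef, hXdef, conjTranspose_mul]
      simp only [star_eq_conjTranspose, Matrix.mul_assoc]
    have h2 : trace (Omᴴ * X) = trace (Wᴴ * A) := by
      rw [h1, Matrix.trace_mul_cycle, hU2, Matrix.one_mul]
    rw [← h2]
    simp only [Matrix.trace, Matrix.diag, Matrix.mul_apply, conjTranspose_apply, star_trivial]
  have hterm : ∀ j, ∑ r, Om r j * X r j ≤ Real.sqrt (lam j) := by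
    intro j
    have hcs := Finset.sum_mul_sq_le_sq_mul_sq Finset.univ (fun r => Om r j) (fun r => X r j)
    have hO2 : ∑ r, (Om r j) ^ 2 ≤ 1 := by
      simpa [sq] using hOcol j
    have hX2 : ∑ r, (X r j) ^ 2 = lam j := by
      simpa [sq] using hXcol j
    have hb : (∑ r, Om r j * X r j) ^ 2 ≤ lam j := by
      calc (∑ r, Om r j * X r j) ^ 2 ≤ (∑ r, (Om r j) ^ 2) * ∑ r, (X r j) ^ 2 := hcs
        _ ≤ 1 * lam j := by
            rw [hX2]
            exact mul_le_mul_of_nonneg_right hO2 (hlam0 j)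
        _ = lam j := one_mul _
    rcases le_or_gt (∑ r, Om r j * X r j) 0 with h | h
    · exact h.trans (Real.sqrt_nonneg _)
    · rw [show lam j = Real.sqrt (lam j) * Real.sqrt (lam j) from
        (Real.mul_self_sqrt (hlam0 j)).symm] at hb
      nlinarith [Real.sqrt_nonneg (lam j)]
  have heach : ∀ j, ∑ r, Om r j * X r j = Real.sqrt (lam j) := by
    have hsum2 : ∑ j, (∑ r, Om r j * X r j) = ∑ j, Real.sqrt (lam j) := by
      rw [hsumtr, htr]
    intro j
    exact (Finset.sum_eq_sum_iff_of_le (fun i _ => hterm i)).mp hsum2 j (Finset.mem_univ j)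
  have hcoleq : ∀ r j, X r j = Real.sqrt (lam j) * Om r j := by
    have hzero : ∀ j, ∑ r, (X r j - Real.sqrt (lam j) * Om r j) ^ 2 = 0 := by
      intro j
      have hexp : ∑ r, (X r j - Real.sqrt (lam j) * Om r j) ^ 2
          = (∑ r, X r j * X r j) - 2 * Real.sqrt (lam j) * (∑ r, Om r j * X r j)
            + Real.sqrt (lam j) ^ 2 * (∑ r, Om r j * Om r j) := by
        rw [Finset.mul_sum, Finset.mul_sum, ← Finset.sum_sub_distrib, ← Finset.sum_add_distrib]
        refine Finset.sum_congr rfl fun r _ => ?_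
        ring
      have hle : ∑ r, (X r j - Real.sqrt (lam j) * Om r j) ^ 2 ≤ 0 := by
        rw [hexp, hXcol j, heach j]
        have hsq : Real.sqrt (lam j) ^ 2 = lam j := Real.sq_sqrt (hlam0 j)
        have h1 : Real.sqrt (lam j) ^ 2 * (∑ r, Om r j * Om r j) ≤ lam j := by
          calc Real.sqrt (lam j) ^ 2 * (∑ r, Om r j * Om r j) ≤ Real.sqrt (lam j) ^ 2 * 1 :=
              mul_le_mul_of_nonneg_left (hOcol j) (sq_nonneg _)
            _ = lam j := by rw [mul_one, hsq]
        nlinarith [Real.sq_sqrt (hlam0 j)]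
      have hge : 0 ≤ ∑ r, (X r j - Real.sqrt (lam j) * Om r j) ^ 2 :=
        Finset.sum_nonneg fun r _ => sq_nonneg _
      exact le_antisymm hle hge
    intro r j
    have := (Finset.sum_eq_zero_iff_of_nonneg (fun r _ => sq_nonneg
      (X r j - Real.sqrt (lam j) * Om r j))).mp (hzero j) r (Finset.mem_univ r)
    have h2 : X r j - Real.sqrt (lam j) * Om r j = 0 := by
      exact pow_eq_zero_iff (two_ne_zero) |>.mp this
    linarith
  have hXOm : X = Om * diagonal (fun j => Real.sqrt (lam j)) := by
    ext r j
    rw [Matrix.mul_diagonal]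
    rw [hcoleq r j]
    ring
  have hPOm : P * Om = Om := by
    rw [hOmdef, ← Matrix.mul_assoc, hPW]
  have hPX : P * X = X := by
    rw [hXOm, ← Matrix.mul_assoc, hPOm]
  have hAXU : A = X * star U := by
    rw [hXdef, Matrix.mul_assoc, hU2, Matrix.mul_one]
  calc P * A = P * (X * star U) := by rw [← hAXU]
    _ = P * X * star U := (Matrix.mul_assoc P X (star U)).symm
    _ = X * star U := by rw [hPX]
    _ = A := hAXU.symm
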